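/- Let M be a DFA with state set Fin n (n ≥ 1), input alphabet Fin m, and start state q₀, and let ε₀ satisfy 0 < ε₀ < 1/(2n). Then there exists H₀ > 0 such that for all H ≥ H₀, for every input word w = a₁a₂…a_T over Fin m and every 0 ≤ t ≤ T, the vector z_t obtained by iterating the second-order sigmoid network step N_H along the letters of w starting from z_0 = e(q₀) satisfies ‖z_t − e(δ*(q₀, a₁…a_t))‖_∞ ≤ ε₀; that is, the n-neuron bounded-precision sigmoid network tracks the DFA computation in real time, within error ε₀ at every step, uniformly over words of arbitrary length. -/

import Mathlib

/-- One-hot vector of an element of `Fin n`. -/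
def oneHot {n : ℕ} (q : Fin n) : Fin n → ℝ := fun i => if i = q then 1 else 0

/-- Transition tensor of a DFA with transition function `δ`:
`W i j k = 1` if `i = δ j k` and `0` otherwise. -/
def transTensor {n m : ℕ} (δ : Fin n → Fin m → Fin n) : Fin n → Fin n → Fin m → ℝ :=
  fun i j k => if i = δ j k then 1 else 0

/-- The parametrized sigmoid `h_H(x) = 1/(1 + exp(−H·x))`. -/
noncomputable def sigmoidH (H x : ℝ) : ℝ := 1 / (1 + Real.exp (-H * x))

/-- The second-order sigmoid network step of a DFA with sensitivity `H`:
`N_H(z, a) i = h_H((Σ_j W i j a * z j) − 1/2)`. -/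
noncomputable def netStepH {n m : ℕ} (δ : Fin n → Fin m → Fin n) (H : ℝ)
    (z : Fin n → ℝ) (a : Fin m) : Fin n → ℝ :=
  fun i => sigmoidH H ((∑ j : Fin n, transTensor δ i j a * z j) - 1 / 2)

/-- Iterating the sigmoid network step along the letters of a word. -/
noncomputable def netRunH {n m : ℕ} (δ : Fin n → Fin m → Fin n) (H : ℝ)
    (z : Fin n → ℝ) (w : List (Fin m)) : Fin n → ℝ :=
  w.foldl (netStepH δ H) z

/-- The extension `δ*` of the DFA transition function to input words. -/
def dfaRun {n m : ℕ} (δ : Fin n → Fin m → Fin n) (q : Fin n) (w : List (Fin m)) : Fin n :=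
  w.foldl δ q

lemma sig_pos (H x : ℝ) : 0 < sigmoidH H x := by
  unfold sigmoidH
  positivity

lemma sig_le_one (H x : ℝ) : sigmoidH H x ≤ 1 := by
  unfold sigmoidH
  rw [div_le_one (by positivity)]
  nlinarith [Real.exp_pos (-H * x)]

lemma sig_le_exp (H x c : ℝ) (hH : 0 < H) (hx : x ≤ -c) :
    sigmoidH H x ≤ Real.exp (-(H * c)) := by
  unfold sigmoidH
  have h1 : Real.exp (-H * x) > 0 := Real.exp_pos _
  have : 1 / (1 + Real.exp (-H * x)) ≤ 1 / Real.exp (-H * x) := by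
    apply one_div_le_one_div_of_le h1; linarith
  refine this.trans ?_
  rw [one_div, ← Real.exp_neg]
  apply Real.exp_le_exp.2
  nlinarith

lemma one_sub_sig_le_exp (H x c : ℝ) (hH : 0 < H) (hx : c ≤ x) :
    1 - sigmoidH H x ≤ Real.exp (-(H * c)) := by
  unfold sigmoidH
  have h1 : Real.exp (-H * x) > 0 := Real.exp_pos _
  have heq : 1 - 1 / (1 + Real.exp (-H * x)) = Real.exp (-H * x) / (1 + Real.exp (-H * x)) := by
    field_simp
    ring
  rw [heq]
  have : Real.exp (-H * x) / (1 + Real.exp (-H * x)) ≤ Real.exp (-H * x) := by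
    apply div_le_self h1.le; linarith
  refine this.trans ?_
  apply Real.exp_le_exp.2
  nlinarith

lemma key_step {n m : ℕ} (δ : Fin n → Fin m → Fin n) (H ε₀ : ℝ) (hε : 0 < ε₀)
    (hsum : (n : ℝ) * ε₀ < 1 / 2) (hn : 1 ≤ n) (hH : 0 < H)
    (hexp : Real.exp (-(H * (1 / 2 - n * ε₀))) ≤ ε₀)
    (z : Fin n → ℝ) (q : Fin n)
    (h0 : ∀ i, 0 ≤ z i) (hz : ∀ i, |z i - oneHot q i| ≤ ε₀) (a : Fin m) :
    (∀ i, 0 ≤ netStepH δ H z a i) ∧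
      (∀ i, |netStepH δ H z a i - oneHot (δ q a) i| ≤ ε₀) := by
  have hn' : (1 : ℝ) ≤ n := by exact_mod_cast hn
  constructor
  · intro i; exact (sig_pos _ _).le
  intro i
  set S := ∑ j : Fin n, transTensor δ i j a * z j with hS
  by_cases hi : i = δ q a
  · -- accepting coordinate
    have hzq : 1 - ε₀ ≤ z q := by
      have := hz q
      simp [oneHot] at this
      have := abs_le.1 this
      linarith [this.1]
    have hterm : ∀ j ∈ Finset.univ, (0:ℝ) ≤ transTensor δ i j a * z j := by
      intro j _
      unfold transTensor
      split <;> simp [h0 j]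
    have hSq : transTensor δ i q a * z q ≤ S :=
      Finset.single_le_sum hterm (Finset.mem_univ q)
    have hWq : transTensor δ i q a = 1 := by simp [transTensor, hi]
    have hSge : 1 - ε₀ ≤ S := by rw [hWq, one_mul] at hSq; linarith
    have harg : (1/2 - (n:ℝ) * ε₀) ≤ S - 1/2 := by nlinarith
    have h1 := one_sub_sig_le_exp H (S - 1/2) (1/2 - (n:ℝ)*ε₀) hH harg
    have h2 := sig_le_one H (S - 1/2)
    have : 1 - netStepH δ H z a i ≤ ε₀ := by
      unfold netStepH; exact le_trans h1 hexp
    have h3 : netStepH δ H z a i ≤ 1 := sig_le_one _ _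
    subst hi
    have h4 : oneHot (δ q a) (δ q a) = 1 := by simp [oneHot]
    rw [h4, abs_le]
    exact ⟨by linarith, by linarith⟩
  · -- rejecting coordinate
    have hle : ∀ j ∈ Finset.univ, transTensor δ i j a * z j ≤ ε₀ := by
      intro j _
      by_cases hj : j = q
      · rw [hj]
        have hW : transTensor δ i q a = 0 := by simp [transTensor, hi]
        rw [hW, zero_mul]; exact hε.le
      · have hzj : z j ≤ ε₀ := by
          have := hz j
          simp [oneHot, hj] at this
          exact (abs_le.1 this).2
        unfold transTensor
        split
        · simpa using hzj
        · simpa using hε.le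
    have hSle : S ≤ (n : ℝ) * ε₀ := by
      calc S ≤ ∑ _j : Fin n, ε₀ := Finset.sum_le_sum hle
        _ = (n : ℝ) * ε₀ := by simp [mul_comm]
    have harg : S - 1/2 ≤ -(1/2 - (n:ℝ)*ε₀) := by linarith
    have h1 := sig_le_exp H (S - 1/2) (1/2 - (n:ℝ)*ε₀) hH harg
    have hne : i ≠ δ q a := hi
    simp only [oneHot, if_neg hne, sub_zero]
    show |sigmoidH H (S - 1/2)| ≤ ε₀
    rw [abs_of_nonneg (sig_pos _ _).le]
    exact le_trans h1 hexp

lemma key_run {n m : ℕ} (δ : Fin n → Fin m → Fin n) (H ε₀ : ℝ) (hε : 0 < ε₀)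
    (hsum : (n : ℝ) * ε₀ < 1 / 2) (hn : 1 ≤ n) (hH : 0 < H)
    (hexp : Real.exp (-(H * (1 / 2 - n * ε₀))) ≤ ε₀) :
    ∀ (w : List (Fin m)) (z : Fin n → ℝ) (q : Fin n),
      (∀ i, 0 ≤ z i) → (∀ i, |z i - oneHot q i| ≤ ε₀) →
      ∀ i, |netRunH δ H z w i - oneHot (dfaRun δ q w) i| ≤ ε₀ := by
  intro w
  induction w with
  | nil => intro z q h0 hz i; simpa [netRunH, dfaRun] using hz i
  | cons a w ih =>
    intro z q h0 hz i
    obtain ⟨h0', hz'⟩ := key_step δ H ε₀ hε hsum hn hH hexp z q h0 hz a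
    have : netRunH δ H z (a :: w) = netRunH δ H (netStepH δ H z a) w := rfl
    rw [this]
    have : dfaRun δ q (a :: w) = dfaRun δ (δ q a) w := rfl
    rw [this]
    exact ih (netStepH δ H z a) (δ q a) h0' hz' i

theorem stmt_15 (n m : ℕ) (hn : 1 ≤ n) (hm : 1 ≤ m)
    (δ : Fin n → Fin m → Fin n) (q₀ : Fin n) (F : Finset (Fin n))
    (ε₀ : ℝ) (hε₀pos : 0 < ε₀) (hε₀lt : ε₀ < 1 / (2 * n)) :
    ∃ H₀ > (0 : ℝ), ∀ H ≥ H₀, ∀ w : List (Fin m), ∀ t ≤ w.length,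
      ‖netRunH δ H (oneHot q₀) (w.take t) - oneHot (dfaRun δ q₀ (w.take t))‖ ≤ ε₀ := by
  have hn0 : (0 : ℝ) < n := by exact_mod_cast hn
  have hsum : (n : ℝ) * ε₀ < 1 / 2 := by
    rw [lt_div_iff₀ (by positivity)] at hε₀lt
    nlinarith
  set c : ℝ := 1 / 2 - (n : ℝ) * ε₀ with hc
  have hcpos : 0 < c := by simp [hc]; linarith
  refine ⟨max 1 ((-Real.log ε₀) / c), lt_of_lt_of_le one_pos (le_max_left _ _), ?_⟩
  intro H hH w t ht
  have hH1 : (1 : ℝ) ≤ H := le_trans (le_max_left _ _) hH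
  have hHpos : 0 < H := lt_of_lt_of_le one_pos hH1
  have hexp : Real.exp (-(H * c)) ≤ ε₀ := by
    have h2 : (-Real.log ε₀) / c ≤ H := le_trans (le_max_right _ _) hH
    have h3 : -Real.log ε₀ ≤ H * c := (div_le_iff₀ hcpos).1 h2
    calc Real.exp (-(H * c)) ≤ Real.exp (Real.log ε₀) := Real.exp_le_exp.2 (by linarith)
      _ = ε₀ := Real.exp_log hε₀pos
  have h0 : ∀ i, 0 ≤ oneHot q₀ i := by
    intro i; unfold oneHot; split <;> norm_num
  have hz : ∀ i, |oneHot q₀ i - oneHot q₀ i| ≤ ε₀ := by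
    intro i; simp [hε₀pos.le]
  have := key_run δ H ε₀ hε₀pos hsum hn hHpos hexp (w.take t) (oneHot q₀) q₀ h0 hz
  rw [pi_norm_le_iff_of_nonneg hε₀pos.le]
  intro i
  simpa [Real.norm_eq_abs] using this i
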